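/- Suppose f : ℝⁿ → ℝⁿ is Lipschitz with constant L_f < 1, x is constant, and y* is the unique fixed point of y ↦ f(y + g(x)). Then any solution y(t) of ẏ = -y + f(y + g(x)) satisfies ‖y(t) - y*‖ ≤ ‖y(0) - y*‖ e^{-(1-L_f)t}, so y* is a global attractor. -/

import Mathlib

/-- With constant input and `L_f < 1`, any solution of the nmODE converges exponentially
to the unique fixed point `y*`: `‖y t - y*‖ ≤ ‖y 0 - y*‖ e^{-(1-L_f) t}`. -/
theorem stmt_3 {n m : ℕ}
    (f : EuclideanSpace ℝ (Fin n) → EuclideanSpace ℝ (Fin n))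
    (g : EuclideanSpace ℝ (Fin m) → EuclideanSpace ℝ (Fin n))
    (x : EuclideanSpace ℝ (Fin m))
    (Lf : NNReal) (hLf : Lf < 1) (hf : LipschitzWith Lf f)
    (ystar : EuclideanSpace ℝ (Fin n)) (hstar : ystar = f (ystar + g x))
    (y : ℝ → EuclideanSpace ℝ (Fin n))
    (hy : ∀ t ≥ (0 : ℝ), HasDerivAt y (-y t + f (y t + g x)) t) :
    ∀ t ≥ (0 : ℝ), ‖y t - ystar‖ ≤ ‖y 0 - ystar‖ * Real.exp (-(1 - (Lf : ℝ)) * t) := by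
  intro T hT
  set G : ℝ → EuclideanSpace ℝ (Fin n) := fun t => Real.exp t • (y t - ystar) with hG
  have hGderiv : ∀ t ∈ Set.Ico (0:ℝ) T,
      HasDerivAt G (Real.exp t • (f (y t + g x) - f (ystar + g x))) t := by
    intro t ht
    have h1 : HasDerivAt (fun t => y t - ystar) (-y t + f (y t + g x)) t :=
      (hy t ht.1).sub_const ystar
    have h2 := (Real.hasDerivAt_exp t).smul h1
    refine h2.congr_deriv ?_
    rw [← hstar]
    module
  have hGcont : ContinuousOn G (Set.Icc 0 T) := by
    intro t ht
    rcases lt_or_eq_of_le ht.2 with h | h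
    · exact ((hGderiv t ⟨ht.1, h⟩).continuousAt).continuousWithinAt
    · subst h
      exact (((Real.hasDerivAt_exp t).smul ((hy t ht.1).sub_const
        ystar)).continuousAt).continuousWithinAt
  have bound : ∀ t ∈ Set.Ico (0:ℝ) T,
      ‖Real.exp t • (f (y t + g x) - f (ystar + g x))‖ ≤ (Lf : ℝ) * ‖G t‖ + 0 := by
    intro t _
    rw [norm_smul, Real.norm_eq_abs, abs_of_pos (Real.exp_pos t), add_zero, hG]
    simp only [norm_smul, Real.norm_eq_abs, abs_of_pos (Real.exp_pos t)]
    have := hf.dist_le_mul (y t + g x) (ystar + g x)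
    rw [dist_eq_norm, dist_eq_norm] at this
    have : ‖f (y t + g x) - f (ystar + g x)‖ ≤ (Lf : ℝ) * ‖y t - ystar‖ := by
      simpa using this
    nlinarith [Real.exp_pos t, norm_nonneg (y t - ystar)]
  have key := norm_le_gronwallBound_of_norm_deriv_right_le hGcont
    (fun t ht => (hGderiv t ht).hasDerivWithinAt)
    (le_of_eq rfl) bound T ⟨hT, le_refl T⟩
  rw [gronwallBound_ε0, sub_zero] at key
  have hG0 : ‖G 0‖ = ‖y 0 - ystar‖ := by simp [hG]
  have hGT : ‖G T‖ = Real.exp T * ‖y T - ystar‖ := by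
    rw [hG]; simp [norm_smul, abs_of_pos (Real.exp_pos T)]
  rw [hG0, hGT] at key
  have hexp : Real.exp (-(1 - (Lf : ℝ)) * T) = Real.exp ((Lf : ℝ) * T) / Real.exp T := by
    rw [← Real.exp_sub]; ring_nf
  rw [hexp]
  rw [ge_iff_le, ← sub_nonneg] at hT
  have hET := Real.exp_pos T
  rw [mul_div_assoc', le_div_iff₀ hET]
  nlinarith [key]
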